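/- Let a_1 ≤ a_2 < 0, K = [a_1,a_2], φ(t) = (t, t², t³), L = φ(K) ⊆ ℝ³, and Λ = convexHull(L). Let c = (0, c_2, c_3) and q = (0, q_2, q_3) in ℝ³ with q_3 ≠ 0, −q_2/q_3 > 0, and c_2 − c_3·(q_2/q_3) < 0. Then for every ξ ∈ ℝ such that the set S_ξ = {m ∈ Λ : q·m = ξ} is nonempty, every point of S_ξ at which m ↦ c·m attains its minimum over S_ξ belongs to L. -/

import Mathlib

open Matrix

noncomputable def stmtF (x : ℝ) : ℝ := x * Real.sqrt x

lemma stmtF_cont : Continuous stmtF := continuous_id.mul Real.continuous_sqrt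

lemma stmtF_sq {t : ℝ} (ht : t ≤ 0) : stmtF (t ^ 2) = -(t ^ 3) := by
  unfold stmtF
  rw [Real.sqrt_sq_eq_abs, abs_of_nonpos ht]
  ring

lemma stmtF_strict : StrictConvexOn ℝ (Set.Ici 0) stmtF := by
  have h := strictConvexOn_rpow (by norm_num : (1:ℝ) < 3/2)
  have key : ∀ x : ℝ, 0 ≤ x → x ^ (3/2 : ℝ) = stmtF x := by
    intro x hx
    rw [stmtF, Real.sqrt_eq_rpow, show (3/2:ℝ) = 1 + 1/2 by norm_num,
      Real.rpow_add' hx (by norm_num), Real.rpow_one]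
  constructor
  · exact convex_Ici 0
  · intro x hx y hy hxy a b ha hb hab
    have hcomb : (0:ℝ) ≤ a • x + b • y := by
      simp only [smul_eq_mul]
      have hx' : (0:ℝ) ≤ x := hx
      have hy' : (0:ℝ) ≤ y := hy
      positivity
    have h5 := h.2 hx hy hxy ha hb hab
    simp only at h5
    rwa [key x hx, key y hy, key _ hcomb] at h5

lemma stmt_interp {A B y : ℝ} (h1 : A ≤ y) (h2 : y ≤ B) :
    ∃ θ : ℝ, 0 ≤ θ ∧ θ ≤ 1 ∧ y = θ * A + (1 - θ) * B := by
  rcases eq_or_lt_of_le (h1.trans h2) with hAB | hAB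
  · exact ⟨0, le_refl 0, zero_le_one, by simp; linarith⟩
  · refine ⟨(B - y) / (B - A), by apply div_nonneg <;> linarith, ?_, ?_⟩
    · rw [div_le_one (by linarith)]; linarith
    · have hne : B - A ≠ 0 := sub_ne_zero.mpr hAB.ne'
      field_simp
      ring

set_option maxHeartbeats 1000000 in
theorem stmt_10
    (a1 a2 : ℝ) (ha : a1 ≤ a2) (ha2 : a2 < 0)
    (φ : ℝ → Fin 3 → ℝ) (hφ : φ = fun t => ![t, t ^ 2, t ^ 3])
    (c2 c3 q2 q3 : ℝ)
    (c q : Fin 3 → ℝ) (hc : c = ![0, c2, c3]) (hq : q = ![0, q2, q3])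
    (hq3 : q3 ≠ 0)
    (h1 : 0 < -(q2 / q3))
    (h2 : c2 - c3 * (q2 / q3) < 0) :
    ∀ ξ : ℝ,
      ({mm ∈ convexHull ℝ (φ '' Set.Icc a1 a2) | q ⬝ᵥ mm = ξ}).Nonempty →
      ∀ m0 ∈ {mm ∈ convexHull ℝ (φ '' Set.Icc a1 a2) | q ⬝ᵥ mm = ξ},
        (∀ m' ∈ {mm ∈ convexHull ℝ (φ '' Set.Icc a1 a2) | q ⬝ᵥ mm = ξ},
          c ⬝ᵥ m0 ≤ c ⬝ᵥ m') →
        m0 ∈ φ '' Set.Icc a1 a2 := by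
  intro ξ _hne m0 hm0 hmin
  obtain ⟨hm0Λ, hm0q⟩ := hm0
  -- dot product expansion
  have hdotq : ∀ m : Fin 3 → ℝ, q ⬝ᵥ m = q2 * m 1 + q3 * m 2 := by
    intro m; simp [hq, dotProduct, Fin.sum_univ_three]
  have hdotc : ∀ m : Fin 3 → ℝ, c ⬝ᵥ m = c2 * m 1 + c3 * m 2 := by
    intro m; simp [hc, dotProduct, Fin.sum_univ_three]
  have hξ0 : q2 * m0 1 + q3 * m0 2 = ξ := by rw [← hdotq]; exact hm0q
  -- key consequence of minimality: coordinate 1 is maximal on the slice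
  have hstar : ∀ m' : Fin 3 → ℝ, m' ∈ convexHull ℝ (φ '' Set.Icc a1 a2) →
      q ⬝ᵥ m' = ξ → m' 1 ≤ m0 1 := by
    intro m' hm'Λ hm'q
    have hle := hmin m' ⟨hm'Λ, hm'q⟩
    rw [hdotc m0, hdotc m'] at hle
    have hξ' : q2 * m' 1 + q3 * m' 2 = ξ := by rw [← hdotq]; exact hm'q
    have hd : m' 2 - m0 2 = -(q2/q3) * (m' 1 - m0 1) := by
      field_simp
      linarith
    by_contra hgt
    push_neg at hgt
    have hdpos : 0 < m' 1 - m0 1 := by linarith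
    have h6 : c3 * (m' 2 - m0 2) = -(c3 * (q2/q3)) * (m' 1 - m0 1) := by rw [hd]; ring
    have h7 := mul_neg_of_neg_of_pos h2 hdpos
    nlinarith [h6, h7, hle]
  -- representation as convex combination
  rw [convexHull_eq] at hm0Λ
  obtain ⟨ι, t, w, z, hw0, hw1, hz, hcm⟩ := hm0Λ
  rw [Finset.centerMass_eq_of_sum_1 _ _ hw1] at hcm
  have hz' : ∀ i ∈ t, ∃ u, u ∈ Set.Icc a1 a2 ∧ φ u = z i := by
    intro i hi; obtain ⟨u, hu, h⟩ := hz i hi; exact ⟨u, hu, h⟩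
  choose! τ hτmem hτφ using hz'
  have hτ1 : ∀ i ∈ t, a1 ≤ τ i := fun i hi => (hτmem i hi).1
  have hτ2 : ∀ i ∈ t, τ i ≤ a2 := fun i hi => (hτmem i hi).2
  have hm0eq : m0 = ∑ i ∈ t, w i • φ (τ i) := by
    rw [← hcm]
    exact (Finset.sum_congr rfl fun i hi => by rw [hτφ i hi]).symm
  have hcoord : ∀ j : Fin 3, m0 j = ∑ i ∈ t, w i * φ (τ i) j := by
    intro j
    rw [hm0eq, Finset.sum_apply]
    rfl
  have hx0 : m0 1 = ∑ i ∈ t, w i * (τ i) ^ 2 := by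
    rw [hcoord 1]; exact Finset.sum_congr rfl fun i hi => by simp [hφ]
  have hy0 : m0 2 = ∑ i ∈ t, w i * (τ i) ^ 3 := by
    rw [hcoord 2]; exact Finset.sum_congr rfl fun i hi => by simp [hφ]
  -- Jensen inequality
  have hmemI : ∀ i ∈ t, (τ i) ^ 2 ∈ Set.Ici (0:ℝ) := fun i _ => Set.mem_Ici.2 (sq_nonneg _)
  have hJ := stmtF_strict.convexOn.map_sum_le hw0 hw1 hmemI
  have hsum2 : ∑ i ∈ t, w i • (τ i) ^ 2 = m0 1 := by
    rw [hx0]; rfl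
  have hsumF : ∑ i ∈ t, w i • stmtF ((τ i) ^ 2) = -(m0 2) := by
    rw [hy0, ← Finset.sum_neg_distrib]
    refine Finset.sum_congr rfl fun i hi => ?_
    rw [stmtF_sq (le_of_lt (lt_of_le_of_lt (hτ2 i hi) ha2))]
    simp [smul_eq_mul]
  rw [hsum2, hsumF] at hJ
  -- case split
  by_cases hA : m0 2 = -(stmtF (m0 1))
  · -- equality case of Jensen: all points coincide
    have heq : stmtF (∑ i ∈ t, w i • (τ i) ^ 2) = ∑ i ∈ t, w i • stmtF ((τ i) ^ 2) := by
      rw [hsum2, hsumF, hA]; ring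
    have hall := (stmtF_strict.map_sum_eq_iff' hw0 hw1 hmemI).1 heq
    obtain ⟨j0, hj0t, hj0w⟩ := Finset.exists_ne_zero_of_sum_ne_zero (hw1 ▸ one_ne_zero)
    refine ⟨τ j0, hτmem j0 hj0t, ?_⟩
    have ht0 : ∀ i ∈ t, w i ≠ 0 → τ i = τ j0 := by
      intro i hi hwi
      have e1 := hall i hi hwi
      have e2 := hall j0 hj0t hj0w
      have e3 : (τ i - τ j0) * (τ i + τ j0) = 0 := by
        have : τ i ^ 2 = τ j0 ^ 2 := by rw [e1, e2]
        nlinarith [this]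
      rcases mul_eq_zero.1 e3 with h | h
      · linarith
      · exfalso
        have := lt_of_le_of_lt (hτ2 i hi) ha2
        have := lt_of_le_of_lt (hτ2 j0 hj0t) ha2
        linarith
    rw [hm0eq]
    have : ∀ i ∈ t, w i • φ (τ i) = w i • φ (τ j0) := by
      intro i hi
      by_cases hwi : w i = 0
      · simp [hwi]
      · rw [ht0 i hi hwi]
    rw [Finset.sum_congr rfl this, ← Finset.sum_smul, hw1, one_smul]
  · -- strict case: build a better point, contradiction
    exfalso
    have hkey : m0 2 < -(stmtF (m0 1)) := lt_of_le_of_ne (by linarith [hJ]) hA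
    set x0 := m0 1 with hx0def
    set y0 := m0 2 with hy0def
    clear_value x0 y0
    have ha1neg : a1 < 0 := lt_of_le_of_lt ha ha2
    have hsq_ub : ∀ i ∈ t, (τ i)^2 ≤ a1^2 := by
      intro i hi; nlinarith [hτ1 i hi, hτ2 i hi, ha2]
    have hsq_lb : ∀ i ∈ t, a2^2 ≤ (τ i)^2 := by
      intro i hi; nlinarith [hτ2 i hi, ha2]
    have hx0ub : x0 ≤ a1^2 := by
      rw [hx0]
      calc ∑ i ∈ t, w i * (τ i)^2 ≤ ∑ i ∈ t, w i * a1^2 :=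
            Finset.sum_le_sum fun i hi => mul_le_mul_of_nonneg_left (hsq_ub i hi) (hw0 i hi)
        _ = a1^2 := by rw [← Finset.sum_mul, hw1, one_mul]
    have hx0lb : a2^2 ≤ x0 := by
      rw [hx0]
      calc a2^2 = ∑ i ∈ t, w i * a2^2 := by rw [← Finset.sum_mul, hw1, one_mul]
        _ ≤ ∑ i ∈ t, w i * (τ i)^2 :=
            Finset.sum_le_sum fun i hi => mul_le_mul_of_nonneg_left (hsq_lb i hi) (hw0 i hi)
    have hx0lt : x0 < a1^2 := by
      rcases lt_or_eq_of_le hx0ub with h | h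
      · exact h
      exfalso
      have hzero : ∑ i ∈ t, w i * (a1^2 - (τ i)^2) = 0 := by
        have e : ∑ i ∈ t, w i * (a1^2 - (τ i)^2) = a1^2 - x0 := by
          simp only [mul_sub]
          rw [Finset.sum_sub_distrib, ← Finset.sum_mul, hw1, one_mul, ← hx0]
        rw [e, h]
        ring
      have hterm := (Finset.sum_eq_zero_iff_of_nonneg
        (fun i hi => mul_nonneg (hw0 i hi) (by nlinarith [hsq_ub i hi]))).1 hzero
      have hyy : y0 = a1^3 := by
        rw [hy0]
        have e : ∀ i ∈ t, w i * (τ i)^3 = w i * a1^3 := by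
          intro i hi
          by_cases hwi : w i = 0
          · rw [hwi]; ring
          · have hs : (τ i)^2 = a1^2 := by
              rcases mul_eq_zero.1 (hterm i hi) with h' | h'
              · exact absurd h' hwi
              · linarith
            have hτa : τ i = a1 := by
              have e3 : (τ i - a1) * (τ i + a1) = 0 := by nlinarith [hs]
              rcases mul_eq_zero.1 e3 with h' | h'
              · linarith
              · exfalso
                have := lt_of_le_of_lt (hτ2 i hi) ha2
                linarith
            rw [hτa]
        rw [Finset.sum_congr rfl e, ← Finset.sum_mul, hw1, one_mul]
      have hFx : stmtF x0 = -(a1^3) := by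
        rw [h]
        exact stmtF_sq (le_of_lt ha1neg)
      rw [hyy, hFx] at hkey
      linarith
    have ha12 : a2^2 < a1^2 := lt_of_le_of_lt hx0lb hx0lt
    set r := -(q2/q3) with hrdef
    set k := (a1^3 - a2^3) / (a1^2 - a2^2) with hkdef
    clear_value r k
    have hk_nonpos : k ≤ 0 := by
      have hnum : a1^3 - a2^3 ≤ 0 := by nlinarith [sq_nonneg (a1+a2), sq_nonneg (a1-a2)]
      rw [hkdef]
      exact div_nonpos_of_nonpos_of_nonneg hnum (by linarith)
    have hchord : ∀ x : ℝ, a2^2 ≤ x → x ≤ a1^2 → a2^3 + k * (x - a2^2) ≤ -(stmtF x) := by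
      intro x hxl hxu
      have hne : a1^2 - a2^2 ≠ 0 := ne_of_gt (by linarith)
      set ν := (x - a2^2) / (a1^2 - a2^2) with hνdef
      have hν0 : 0 ≤ ν := div_nonneg (by linarith) (by linarith)
      have hν1 : ν ≤ 1 := by rw [hνdef, div_le_one (by linarith)]; linarith
      have hconv := stmtF_strict.convexOn.2 (Set.mem_Ici.2 (sq_nonneg a1))
        (Set.mem_Ici.2 (sq_nonneg a2)) hν0 (show (0:ℝ) ≤ 1 - ν by linarith)
        (show ν + (1 - ν) = 1 by ring)
      have harg : ν • a1^2 + (1 - ν) • a2^2 = x := by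
        simp only [smul_eq_mul, hνdef]
        field_simp [hne]
        ring
      have hF1 : stmtF (a1^2) = -(a1^3) := stmtF_sq (le_of_lt ha1neg)
      have hF2 : stmtF (a2^2) = -(a2^3) := stmtF_sq (le_of_lt ha2)
      rw [harg, hF1, hF2] at hconv
      simp only [smul_eq_mul] at hconv
      have hkx : a2^3 + k * (x - a2^2) = -(ν * -(a1^3) + (1-ν) * -(a2^3)) := by
        rw [hkdef, hνdef]
        field_simp [hne]
        ring
      rw [hkx]
      linarith
    have hy0lb : a2^3 + k * (x0 - a2^2) ≤ y0 := by
      have hstep : ∀ i ∈ t, w i * (a2^3 + k * ((τ i)^2 - a2^2)) ≤ w i * (τ i)^3 := by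
        intro i hi
        apply mul_le_mul_of_nonneg_left _ (hw0 i hi)
        have hch := hchord ((τ i)^2) (hsq_lb i hi) (hsq_ub i hi)
        rw [stmtF_sq (le_of_lt (lt_of_le_of_lt (hτ2 i hi) ha2))] at hch
        linarith
      have hsumstep := Finset.sum_le_sum hstep
      have hlhs : ∑ i ∈ t, w i * (a2^3 + k * ((τ i)^2 - a2^2))
          = a2^3 + k * (x0 - a2^2) := by
        have expand : ∀ i, w i * (a2^3 + k * ((τ i)^2 - a2^2))
            = w i * (a2^3 - k * a2^2) + k * (w i * (τ i)^2) := fun i => by ring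
        simp only [expand]
        rw [Finset.sum_add_distrib, ← Finset.sum_mul, hw1, one_mul, ← Finset.mul_sum, ← hx0]
        ring
      rw [hlhs] at hsumstep
      rw [hy0]
      exact hsumstep
    set ε := -(stmtF x0) - y0 with hεdef
    have hεpos : 0 < ε := by rw [hεdef]; linarith
    have hrpos : 0 < r := h1
    obtain ⟨δ0, hδ0pos, hδ0⟩ := Metric.continuousAt_iff.1 stmtF_cont.continuousAt (ε/2) (by linarith)
    set δ := min (δ0/2) (min (a1^2 - x0) (ε/(2*r))) with hδdef
    have hδpos : 0 < δ := lt_min (by linarith) (lt_min (by linarith) (by positivity))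
    have hδ1 : δ ≤ a1^2 - x0 := le_trans (min_le_right _ _) (min_le_left _ _)
    have hδ2 : δ ≤ ε/(2*r) := le_trans (min_le_right _ _) (min_le_right _ _)
    have hδ3 : δ < δ0 := lt_of_le_of_lt (min_le_left _ _) (by linarith)
    set x1 := x0 + δ with hx1def
    set y1 := y0 + r * δ with hy1def
    clear_value y1 x1 δ
    have hx1ub : x1 ≤ a1^2 := by rw [hx1def]; linarith
    have hx1lb : a2^2 ≤ x1 := by rw [hx1def]; linarith
    have hx1pos : 0 ≤ x1 := le_trans (sq_nonneg a2) hx1lb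
    have hFx1 : stmtF x1 < stmtF x0 + ε/2 := by
      have hd := hδ0 (show dist x1 x0 < δ0 by
        rw [Real.dist_eq, hx1def, add_sub_cancel_left, abs_of_pos hδpos]; exact hδ3)
      rw [Real.dist_eq] at hd
      have := (abs_lt.1 hd).2
      linarith
    have hrδ : r * δ ≤ ε/2 := by
      calc r * δ ≤ r * (ε/(2*r)) := mul_le_mul_of_nonneg_left hδ2 (le_of_lt hrpos)
        _ = ε/2 := by field_simp
    have hy1ub : y1 ≤ -(stmtF x1) := by
      rw [hy1def]
      rw [hεdef] at hFx1 hrδ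
      linarith
    have hy1lb : a2^3 + k * (x1 - a2^2) ≤ y1 := by
      have hkδ : k * δ ≤ 0 := mul_nonpos_of_nonpos_of_nonneg hk_nonpos (le_of_lt hδpos)
      have e : a2^3 + k * (x1 - a2^2) = (a2^3 + k * (x0 - a2^2)) + k * δ := by
        rw [hx1def]; ring
      rw [e, hy1def]
      have := mul_pos hrpos hδpos
      linarith
    obtain ⟨θ, hθ0, hθ1, hθeq⟩ := stmt_interp hy1lb hy1ub
    set μ := (x1 - a2^2) / (a1^2 - a2^2) with hμdef
    have hμ0 : 0 ≤ μ := div_nonneg (by linarith) (by linarith)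
    have hμ1 : μ ≤ 1 := by rw [hμdef, div_le_one (by linarith)]; linarith
    set t1 := -Real.sqrt x1 with ht1def
    have ht1sq : t1^2 = x1 := by
      have e : t1^2 = (Real.sqrt x1)^2 := by rw [ht1def]; ring
      rw [e, Real.sq_sqrt hx1pos]
    have ht1nonpos : t1 ≤ 0 := by
      rw [ht1def]
      simp [Real.sqrt_nonneg]
    have ht1cube : t1^3 = -(stmtF x1) := by
      have e := stmtF_sq ht1nonpos
      rw [ht1sq] at e
      linarith
    have ht1mem : t1 ∈ Set.Icc a1 a2 := by
      constructor
      · have h8 : Real.sqrt x1 ≤ -a1 := by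
          have h9 := Real.sqrt_le_sqrt hx1ub
          rwa [show a1^2 = (-a1)^2 by ring, Real.sqrt_sq (by linarith : (0:ℝ) ≤ -a1)] at h9
        rw [ht1def]; linarith
      · have h9 : -a2 ≤ Real.sqrt x1 := by
          have h10 := Real.sqrt_le_sqrt hx1lb
          rwa [show a2^2 = (-a2)^2 by ring, Real.sqrt_sq (by linarith : (0:ℝ) ≤ -a2)] at h10
        rw [ht1def]; linarith
    set mq : Fin 3 → ℝ := θ • (μ • φ a1 + (1 - μ) • φ a2) + (1 - θ) • φ t1 with hmqdef
    have hmemΛ : mq ∈ convexHull ℝ (φ '' Set.Icc a1 a2) := by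
      have hconv := convex_convexHull ℝ (φ '' Set.Icc a1 a2)
      have hp1 : φ a1 ∈ convexHull ℝ (φ '' Set.Icc a1 a2) :=
        subset_convexHull _ _ ⟨a1, ⟨le_refl a1, ha⟩, rfl⟩
      have hp2 : φ a2 ∈ convexHull ℝ (φ '' Set.Icc a1 a2) :=
        subset_convexHull _ _ ⟨a2, ⟨ha, le_refl a2⟩, rfl⟩
      have hp3 : φ t1 ∈ convexHull ℝ (φ '' Set.Icc a1 a2) :=
        subset_convexHull _ _ ⟨t1, ht1mem, rfl⟩
      have hinner := hconv hp1 hp2 hμ0 (show (0:ℝ) ≤ 1 - μ by linarith)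
        (show μ + (1 - μ) = 1 by ring)
      exact hconv hinner hp3 hθ0 (show (0:ℝ) ≤ 1 - θ by linarith)
        (show θ + (1 - θ) = 1 by ring)
    have e11 : φ a1 1 = a1^2 := by simp [hφ]
    have e12 : φ a2 1 = a2^2 := by simp [hφ]
    have e13 : φ t1 1 = t1^2 := by simp [hφ]
    have e21 : φ a1 2 = a1^3 := by simp [hφ]
    have e22 : φ a2 2 = a2^3 := by simp [hφ]
    have e23 : φ t1 2 = t1^3 := by simp [hφ]
    have hne12 : a1^2 - a2^2 ≠ 0 := ne_of_gt (by linarith)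
    have harg : μ * a1^2 + (1-μ) * a2^2 = x1 := by
      rw [hμdef]
      field_simp [hne12]
      ring
    have hm'1 : mq 1 = x1 := by
      rw [hmqdef]
      simp only [Pi.add_apply, Pi.smul_apply, smul_eq_mul, e11, e12, e13, ht1sq]
      linear_combination θ * harg
    have hl : μ * a1^3 + (1-μ) * a2^3 = a2^3 + k * (x1 - a2^2) := by
      rw [hμdef, hkdef]
      field_simp [hne12]
      ring
    have hm'2 : mq 2 = y1 := by
      rw [hmqdef]
      simp only [Pi.add_apply, Pi.smul_apply, smul_eq_mul, e21, e22, e23, ht1cube]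
      linear_combination θ * hl + hθeq.symm
    have hq3r : q3 * r = -q2 := by
      rw [hrdef, mul_neg, mul_comm q3 (q2/q3), div_mul_cancel₀ _ hq3]
    have hm'q : q ⬝ᵥ mq = ξ := by
      rw [hdotq, hm'1, hm'2, hx1def, hy1def]
      linear_combination hξ0 + δ * hq3r
    have hcontra := hstar mq hmemΛ hm'q
    rw [hm'1, hx1def] at hcontra
    linarith
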